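/- Let M be a matroid on a finite ground set E with m = |E| ≥ 1, and let Δ be a decision function for M. For each base B of M, let 𝓘(B) be the set of Δ-active elements belonging to B and 𝓔(B) the set of Δ-active elements not in B. Then the subset intervals [B ∖ 𝓘(B), B ∪ 𝓔(B)] := {A ⊆ E : B ∖ 𝓘(B) ⊆ A ⊆ B ∪ 𝓔(B)}, indexed by the bases B of M, form a partition of the power set of E; equivalently, for every A ⊆ E there is exactly one base B of M with B ∖ 𝓘(B) ⊆ A ⊆ B ∪ 𝓔(B). -/

import Mathlib

open Matroid
open scoped Classical

/-- The rank of a set in a matroid: the largest cardinality of an independent subset. -/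
noncomputable def mRank {α : Type*} (M : Matroid α) (A : Set α) : ℕ :=
  sSup {n : ℕ | ∃ I : Set α, M.Indep I ∧ I ⊆ A ∧ I.ncard = n}

/-- `e` is a loop of `M`. -/
def mLoop {α : Type*} (M : Matroid α) (e : α) : Prop :=
  e ∈ M.E ∧ ¬ M.Indep {e}

/-- `e` is a coloop of `M` (an element of every base). -/
def mColoop {α : Type*} (M : Matroid α) (e : α) : Prop :=
  e ∈ M.E ∧ ∀ B : Set α, M.IsBase B → e ∈ B

/-- Deletion of the element `e` from `M`. -/
def mDel {α : Type*} (M : Matroid α) (e : α) : Matroid α :=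
  M ↾ (M.E \ {e})

/-- Contraction of the element `e` in `M`. -/
def mCon {α : Type*} (M : Matroid α) (e : α) : Matroid α :=
  (M✶ ↾ (M.E \ {e}))✶

/-- One step of the resolution algorithm: given the current minor and the list of directions
taken so far, query the decision function and delete/contract accordingly
(`false` = ℓ, `true` = r). -/
noncomputable def mStep {α : Type*} (S : Set α) (Δ : List Bool → α) :
    Matroid α × List Bool → Matroid α × List Bool := fun p =>
  if mLoop p.1 (Δ p.2) then (mDel p.1 (Δ p.2), p.2 ++ [false])
  else if mColoop p.1 (Δ p.2) then (mCon p.1 (Δ p.2), p.2 ++ [true])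
  else if Δ p.2 ∈ S then (mCon p.1 (Δ p.2), p.2 ++ [true])
  else (mDel p.1 (Δ p.2), p.2 ++ [false])

/-- The set of `Δ`-active elements of `S`: elements that are a loop or a coloop of the
current minor at the time they are visited. -/
noncomputable def mActive {α : Type*} (M : Matroid α) (m : ℕ) (Δ : List Bool → α)
    (S : Set α) : Set α :=
  {x : α | ∃ k : ℕ, k < m ∧
    x = Δ ((mStep S Δ)^[k] (M, ([] : List Bool))).2 ∧
    (mLoop ((mStep S Δ)^[k] (M, ([] : List Bool))).1 x ∨
      mColoop ((mStep S Δ)^[k] (M, ([] : List Bool))).1 x)}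

/-- `Δ` is a decision function for `M` (with `m` elements): values lie in the ground set, and
along each branch no element is repeated. -/
def IsDecisionFunction {α : Type*} (M : Matroid α) (m : ℕ) (Δ : List Bool → α) : Prop :=
  (∀ L : List Bool, L.length < m → Δ L ∈ M.E) ∧
  (∀ L L' : List Bool, L.length < m → L' <+: L → L' ≠ L → Δ L' ≠ Δ L)

namespace S19
variable {α : Type*}

lemma mLoop_not_mColoop {M : Matroid α} {e : α} (h : mLoop M e) : ¬ mColoop M e := by
  obtain ⟨B, hB⟩ := M.exists_isBase
  rintro ⟨-, h2⟩
  exact h.2 (hB.indep.subset (Set.singleton_subset_iff.2 (h2 B hB)))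

lemma mDel_ground (M : Matroid α) (e : α) : (mDel M e).E = M.E \ {e} := rfl

lemma mCon_ground (M : Matroid α) (e : α) : (mCon M e).E = M.E \ {e} := rfl

lemma mDel_base_iff {M : Matroid α} {e : α} {B0 : Set α} (hB0 : M.IsBase B0) (he : e ∉ B0)
    (X : Set α) : (mDel M e).IsBase X ↔ M.IsBase X ∧ e ∉ X := by
  rw [mDel, isBase_restrict_iff Set.diff_subset]
  constructor
  · intro h
    refine ⟨hB0.isBase_of_isBasis_superset (Set.subset_diff_singleton hB0.subset_ground he) h,
      fun heX => (h.subset heX).2 rfl⟩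
  · rintro ⟨h, heX⟩
    exact h.isBasis_of_subset Set.diff_subset
      (Set.subset_diff_singleton h.subset_ground heX)

lemma mCon_base_iff {M : Matroid α} {e : α} (he : M.Indep {e}) (X : Set α) :
    (mCon M e).IsBase X ↔ M.IsBase (insert e X) ∧ e ∉ X := by
  have heE : e ∈ M.E := he.subset_ground rfl
  obtain ⟨B, hB, heB⟩ := he.exists_isBase_superset
  have heB' : e ∈ B := heB rfl
  have hdB0 : M✶.IsBase (M.E \ B) := hB.compl_isBase_dual
  have hdual : mCon M e = (mDel M✶ e)✶ := rfl
  have key : ∀ Y : Set α, Y ⊆ M.E → e ∉ Y →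
      M.E \ ((M.E \ {e}) \ Y) = insert e Y := by
    intro Y hY heY
    ext x
    simp only [Set.mem_diff, Set.mem_singleton_iff, Set.mem_insert_iff]
    constructor
    · rintro ⟨hxE, hx⟩
      by_contra hcon
      push_neg at hcon
      exact hx ⟨⟨hxE, hcon.1⟩, hcon.2⟩
    · rintro (rfl | hx)
      · exact ⟨heE, fun h => h.1.2 rfl⟩
      · exact ⟨hY hx, fun h => h.2 hx⟩
  rw [hdual, dual_isBase_iff']
  rw [mDel_ground, Matroid.dual_ground]
  rw [mDel_base_iff hdB0 (fun h => h.2 heB')]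
  constructor
  · rintro ⟨⟨hb, -⟩, hXE⟩
    have hX : X ⊆ M.E := hXE.trans Set.diff_subset
    have heX : e ∉ X := fun h => (hXE h).2 rfl
    rw [Matroid.dual_isBase_iff (Set.diff_subset.trans Set.diff_subset), key X hX heX] at hb
    exact ⟨hb, heX⟩
  · rintro ⟨hb, heX⟩
    have hX : X ⊆ M.E := (Set.subset_insert e X).trans hb.subset_ground
    have hXE : X ⊆ M.E \ {e} := Set.subset_diff_singleton hX heX
    refine ⟨⟨?_, fun h => h.1.2 rfl⟩, hXE⟩
    rw [Matroid.dual_isBase_iff (Set.diff_subset.trans Set.diff_subset), key X hX heX]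
    exact hb

/-! ### The run of the algorithm -/

variable (M : Matroid α) (Δ : List Bool → α) (S : Set α)

noncomputable def runP (k : ℕ) : Matroid α × List Bool :=
  (mStep S Δ)^[k] (M, ([] : List Bool))

noncomputable def eV (k : ℕ) : α := Δ (runP M Δ S k).2

def conS (k : ℕ) : Prop :=
  mColoop (runP M Δ S k).1 (eV M Δ S k) ∨
    (¬ mLoop (runP M Δ S k).1 (eV M Δ S k) ∧ eV M Δ S k ∈ S)

def CS (k : ℕ) : Set α := {x | ∃ i, i < k ∧ x = eV M Δ S i ∧ conS M Δ S i}
def DS (k : ℕ) : Set α := {x | ∃ i, i < k ∧ x = eV M Δ S i ∧ ¬ conS M Δ S i}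
def PS (k : ℕ) : Set α := {x | ∃ i, i < k ∧ x = eV M Δ S i}

lemma runP_succ (k : ℕ) : runP M Δ S (k + 1) = mStep S Δ (runP M Δ S k) :=
  Function.iterate_succ_apply' _ _ _

lemma run_succ_con {k : ℕ} (h : conS M Δ S k) :
    runP M Δ S (k + 1) =
      (mCon (runP M Δ S k).1 (eV M Δ S k), (runP M Δ S k).2 ++ [true]) := by
  rw [runP_succ]
  have he : eV M Δ S k = Δ (runP M Δ S k).2 := rfl
  simp only [mStep, ← he]
  have hnl : ¬ mLoop (runP M Δ S k).1 (eV M Δ S k) := by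
    rcases h with h | h
    · exact fun hl => mLoop_not_mColoop hl h
    · exact h.1
  rw [if_neg hnl]
  rcases h with h | h
  · rw [if_pos h]
  · by_cases h2 : mColoop (runP M Δ S k).1 (eV M Δ S k)
    · rw [if_pos h2]
    · rw [if_neg h2, if_pos h.2]

lemma run_succ_del {k : ℕ} (h : ¬ conS M Δ S k) :
    runP M Δ S (k + 1) =
      (mDel (runP M Δ S k).1 (eV M Δ S k), (runP M Δ S k).2 ++ [false]) := by
  rw [runP_succ]
  have he : eV M Δ S k = Δ (runP M Δ S k).2 := rfl
  simp only [mStep, ← he]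
  rw [conS] at h
  push_neg at h
  by_cases h1 : mLoop (runP M Δ S k).1 (eV M Δ S k)
  · rw [if_pos h1]
  · rw [if_neg h1, if_neg h.1, if_neg (h.2 h1)]

lemma runP_len (k : ℕ) : (runP M Δ S k).2.length = k := by
  induction k with
  | zero => rfl
  | succ k ih =>
    by_cases h : conS M Δ S k
    · rw [run_succ_con M Δ S h]; simp [ih]
    · rw [run_succ_del M Δ S h]; simp [ih]

lemma runP_prefix {i k : ℕ} (h : i ≤ k) : (runP M Δ S i).2 <+: (runP M Δ S k).2 := by
  induction k with
  | zero => simpa [Nat.le_zero.mp h] using List.prefix_refl _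
  | succ k ih =>
    rcases Nat.lt_succ_iff_lt_or_eq.mp (Nat.lt_succ_of_le h) with h' | rfl
    · have step : (runP M Δ S k).2 <+: (runP M Δ S (k+1)).2 := by
        by_cases hc : conS M Δ S k
        · rw [run_succ_con M Δ S hc]; exact List.prefix_append _ _
        · rw [run_succ_del M Δ S hc]; exact List.prefix_append _ _
      exact (ih (Nat.lt_succ_iff.mp h')).trans step
    · exact List.prefix_refl _

lemma PS_succ (k : ℕ) : PS M Δ S (k + 1) = PS M Δ S k ∪ {eV M Δ S k} := by
  ext x
  simp only [PS, Set.mem_setOf_eq, Set.mem_union, Set.mem_singleton_iff,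
    Nat.lt_succ_iff_lt_or_eq]
  constructor
  · rintro ⟨i, hi | rfl, hx⟩
    · exact Or.inl ⟨i, hi, hx⟩
    · exact Or.inr hx
  · rintro (⟨i, hi, hx⟩ | hx)
    · exact ⟨i, Or.inl hi, hx⟩
    · exact ⟨k, Or.inr rfl, hx⟩

lemma CS_succ_con {k : ℕ} (h : conS M Δ S k) :
    CS M Δ S (k + 1) = CS M Δ S k ∪ {eV M Δ S k} := by
  ext x
  simp only [CS, Set.mem_setOf_eq, Set.mem_union, Set.mem_singleton_iff,
    Nat.lt_succ_iff_lt_or_eq]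
  constructor
  · rintro ⟨i, hi | rfl, hx, hc⟩
    · exact Or.inl ⟨i, hi, hx, hc⟩
    · exact Or.inr hx
  · rintro (⟨i, hi, hx, hc⟩ | hx)
    · exact ⟨i, Or.inl hi, hx, hc⟩
    · exact ⟨k, Or.inr rfl, hx, h⟩

lemma DS_succ_con {k : ℕ} (h : conS M Δ S k) : DS M Δ S (k + 1) = DS M Δ S k := by
  ext x
  simp only [DS, Set.mem_setOf_eq, Nat.lt_succ_iff_lt_or_eq]
  constructor
  · rintro ⟨i, hi | rfl, hx, hc⟩
    · exact ⟨i, hi, hx, hc⟩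
    · exact absurd h hc
  · rintro ⟨i, hi, hx, hc⟩
    exact ⟨i, Or.inl hi, hx, hc⟩

lemma CS_succ_del {k : ℕ} (h : ¬ conS M Δ S k) : CS M Δ S (k + 1) = CS M Δ S k := by
  ext x
  simp only [CS, Set.mem_setOf_eq, Nat.lt_succ_iff_lt_or_eq]
  constructor
  · rintro ⟨i, hi | rfl, hx, hc⟩
    · exact ⟨i, hi, hx, hc⟩
    · exact absurd hc h
  · rintro ⟨i, hi, hx, hc⟩
    exact ⟨i, Or.inl hi, hx, hc⟩

lemma DS_succ_del {k : ℕ} (h : ¬ conS M Δ S k) :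
    DS M Δ S (k + 1) = DS M Δ S k ∪ {eV M Δ S k} := by
  ext x
  simp only [DS, Set.mem_setOf_eq, Set.mem_union, Set.mem_singleton_iff,
    Nat.lt_succ_iff_lt_or_eq]
  constructor
  · rintro ⟨i, hi | rfl, hx, hc⟩
    · exact Or.inl ⟨i, hi, hx, hc⟩
    · exact Or.inr hx
  · rintro (⟨i, hi, hx, hc⟩ | hx)
    · exact ⟨i, Or.inl hi, hx, hc⟩
    · exact ⟨k, Or.inr rfl, hx, h⟩

lemma CS_subset_PS (k : ℕ) : CS M Δ S k ⊆ PS M Δ S k := by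
  rintro x ⟨i, hi, hx, -⟩; exact ⟨i, hi, hx⟩

lemma DS_subset_PS (k : ℕ) : DS M Δ S k ⊆ PS M Δ S k := by
  rintro x ⟨i, hi, hx, -⟩; exact ⟨i, hi, hx⟩

lemma CS_union_DS (k : ℕ) : CS M Δ S k ∪ DS M Δ S k = PS M Δ S k := by
  ext x
  simp only [CS, DS, PS, Set.mem_union, Set.mem_setOf_eq]
  constructor
  · rintro (⟨i, hi, hx, -⟩ | ⟨i, hi, hx, -⟩) <;> exact ⟨i, hi, hx⟩
  · rintro ⟨i, hi, hx⟩
    by_cases hc : conS M Δ S i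
    · exact Or.inl ⟨i, hi, hx, hc⟩
    · exact Or.inr ⟨i, hi, hx, hc⟩

lemma runP_ground (k : ℕ) : (runP M Δ S k).1.E = M.E \ PS M Δ S k := by
  induction k with
  | zero =>
    have : PS M Δ S 0 = ∅ := by
      ext x; simp [PS]
    simp [runP, this]
  | succ k ih =>
    have h' : PS M Δ S (k+1) = PS M Δ S k ∪ {eV M Δ S k} := PS_succ M Δ S k
    by_cases h : conS M Δ S k
    · rw [run_succ_con M Δ S h, mCon_ground, ih, h', ← Set.diff_diff]
    · rw [run_succ_del M Δ S h, mDel_ground, ih, h', ← Set.diff_diff]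

variable {m : ℕ}

lemma eV_mem (hΔ : IsDecisionFunction M m Δ) {k : ℕ} (hk : k < m) : eV M Δ S k ∈ M.E :=
  hΔ.1 _ (by rw [runP_len]; exact hk)

lemma eV_ne (hΔ : IsDecisionFunction M m Δ) {i k : ℕ} (hik : i < k) (hk : k < m) :
    eV M Δ S i ≠ eV M Δ S k := by
  refine hΔ.2 (runP M Δ S k).2 (runP M Δ S i).2 (by rw [runP_len]; exact hk)
    (runP_prefix M Δ S hik.le) ?_
  intro h
  have := congrArg List.length h
  rw [runP_len, runP_len] at this
  omega

lemma eV_not_PS (hΔ : IsDecisionFunction M m Δ) {k : ℕ} (hk : k < m) :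
    eV M Δ S k ∉ PS M Δ S k := by
  rintro ⟨i, hi, heq⟩
  exact eV_ne M Δ S hΔ hi hk heq.symm

lemma disj_CD (hΔ : IsDecisionFunction M m Δ) {k : ℕ} (hk : k ≤ m) :
    Disjoint (CS M Δ S k) (DS M Δ S k) := by
  rw [Set.disjoint_left]
  rintro x ⟨i, hi, rfl, hci⟩ ⟨j, hj, hx, hcj⟩
  rcases lt_trichotomy i j with h | rfl | h
  · exact eV_ne M Δ S hΔ h (lt_of_lt_of_le hj hk) hx
  · exact hcj hci
  · exact eV_ne M Δ S hΔ h (lt_of_lt_of_le hi hk) hx.symm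

/-- The key invariant. -/
lemma inv (hΔ : IsDecisionFunction M m Δ) :
    ∀ k, k ≤ m → ∀ B, B ⊆ M.E →
      ((M.IsBase B ∧ CS M Δ S k ⊆ B ∧ Disjoint B (DS M Δ S k)) ↔
        (CS M Δ S k ⊆ B ∧ Disjoint B (DS M Δ S k) ∧ (runP M Δ S k).1.IsBase (B \ CS M Δ S k))) := by
  intro k
  induction k with
  | zero =>
    intro _ B hB
    have hC : CS M Δ S 0 = ∅ := by ext x; simp [CS]
    have hD : DS M Δ S 0 = ∅ := by ext x; simp [DS]
    rw [hC, hD]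
    simp [runP]
  | succ k ih =>
    intro hk1 B hB
    have hk : k < m := hk1
    have ihk := ih hk.le B hB
    have hePS : eV M Δ S k ∉ PS M Δ S k := eV_not_PS M Δ S hΔ hk
    have heCS : eV M Δ S k ∉ CS M Δ S k := fun h => hePS (CS_subset_PS M Δ S k h)
    have heDS : eV M Δ S k ∉ DS M Δ S k := fun h => hePS (DS_subset_PS M Δ S k h)
    have heG : eV M Δ S k ∈ (runP M Δ S k).1.E := by
      rw [runP_ground]
      exact ⟨eV_mem M Δ S hΔ hk, hePS⟩
    by_cases hc : conS M Δ S k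
    · -- contraction step
      have hfst : (runP M Δ S (k+1)).1 = mCon (runP M Δ S k).1 (eV M Δ S k) := by
        rw [run_succ_con M Δ S hc]
      have hindep : (runP M Δ S k).1.Indep {eV M Δ S k} := by
        rcases hc with h | h
        · obtain ⟨B1, hB1⟩ := (runP M Δ S k).1.exists_isBase
          exact hB1.indep.subset (Set.singleton_subset_iff.2 (h.2 B1 hB1))
        · by_contra hni
          exact h.1 ⟨heG, hni⟩
      have hkey : ∀ B' : Set α, eV M Δ S k ∈ B' →
          insert (eV M Δ S k) (B' \ (CS M Δ S k ∪ {eV M Δ S k})) = B' \ CS M Δ S k := by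
        intro B' heB'
        ext x
        simp only [Set.mem_insert_iff, Set.mem_diff, Set.mem_union, Set.mem_singleton_iff]
        constructor
        · rintro (rfl | ⟨hx, hx2⟩)
          · exact ⟨heB', heCS⟩
          · exact ⟨hx, fun h => hx2 (Or.inl h)⟩
        · rintro ⟨hx, hx2⟩
          by_cases hxe : x = eV M Δ S k
          · exact Or.inl hxe
          · exact Or.inr ⟨hx, fun h => h.elim hx2 hxe⟩
      rw [hfst, CS_succ_con M Δ S hc, DS_succ_con M Δ S hc,
        mCon_base_iff hindep]
      constructor
      · rintro ⟨hBase, hCB, hdisj⟩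
        have heB : eV M Δ S k ∈ B := hCB (Set.mem_union_right _ rfl)
        have hCkB : CS M Δ S k ⊆ B := Set.subset_union_left.trans hCB
        obtain ⟨-, -, hbase⟩ := ihk.mp ⟨hBase, hCkB, hdisj⟩
        refine ⟨hCB, hdisj, ?_, fun h => h.2 (Set.mem_union_right _ rfl)⟩
        rw [hkey B heB]
        exact hbase
      · rintro ⟨hCB, hdisj, hbase, -⟩
        have heB : eV M Δ S k ∈ B := hCB (Set.mem_union_right _ rfl)
        have hCkB : CS M Δ S k ⊆ B := Set.subset_union_left.trans hCB
        rw [hkey B heB] at hbase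
        exact ⟨(ihk.mpr ⟨hCkB, hdisj, hbase⟩).1, hCB, hdisj⟩
    · -- deletion step
      have hfst : (runP M Δ S (k+1)).1 = mDel (runP M Δ S k).1 (eV M Δ S k) := by
        rw [run_succ_del M Δ S hc]
      have hncl : ¬ mColoop (runP M Δ S k).1 (eV M Δ S k) := fun h => hc (Or.inl h)
      have hB0 : ∃ B0, (runP M Δ S k).1.IsBase B0 ∧ eV M Δ S k ∉ B0 := by
        rw [mColoop] at hncl
        push_neg at hncl
        exact hncl heG
      obtain ⟨B0, hB0, heB0⟩ := hB0
      rw [hfst, CS_succ_del M Δ S hc, DS_succ_del M Δ S hc,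
        mDel_base_iff hB0 heB0]
      have hdsplit : ∀ B' : Set α, Disjoint B' (DS M Δ S k ∪ {eV M Δ S k}) ↔
          Disjoint B' (DS M Δ S k) ∧ eV M Δ S k ∉ B' := by
        intro B'
        rw [Set.disjoint_union_right, Set.disjoint_singleton_right]
      constructor
      · rintro ⟨hBase, hCB, hdisj⟩
        rw [hdsplit] at hdisj
        obtain ⟨-, -, hbase⟩ := ihk.mp ⟨hBase, hCB, hdisj.1⟩
        rw [hdsplit]
        exact ⟨hCB, ⟨hdisj.1, hdisj.2⟩, hbase, fun h => hdisj.2 h.1⟩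
      · rintro ⟨hCB, hdisj, hbase, -⟩
        rw [hdsplit] at hdisj
        refine ⟨(ihk.mpr ⟨hCB, hdisj.1, hbase⟩).1, hCB, ?_⟩
        rw [hdsplit]
        exact hdisj

lemma PS_subset (hΔ : IsDecisionFunction M m Δ) : PS M Δ S m ⊆ M.E := by
  rintro x ⟨i, hi, rfl⟩
  exact eV_mem M Δ S hΔ hi

lemma PS_eq (hΔ : IsDecisionFunction M m Δ) (hE : M.E.Finite) (hcard : M.E.ncard = m) :
    PS M Δ S m = M.E := by
  have himg : PS M Δ S m = (fun i => eV M Δ S i) '' Set.Iio m := by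
    ext x
    simp only [PS, Set.mem_setOf_eq, Set.mem_image, Set.mem_Iio]
    constructor
    · rintro ⟨i, hi, rfl⟩; exact ⟨i, hi, rfl⟩
    · rintro ⟨i, hi, rfl⟩; exact ⟨i, hi, rfl⟩
  have hinj : Set.InjOn (fun i => eV M Δ S i) (Set.Iio m) := by
    intro i hi j hj hij
    by_contra hne
    rcases lt_or_gt_of_ne hne with h | h
    · exact eV_ne M Δ S hΔ h hj hij
    · exact eV_ne M Δ S hΔ h hi hij.symm
  have hncard : (PS M Δ S m).ncard = m := by
    rw [himg, Set.ncard_image_of_injOn hinj, ← Finset.coe_range,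
      Set.ncard_coe_finset, Finset.card_range]
  exact Set.eq_of_subset_of_ncard_le (PS_subset M Δ S hΔ) (by rw [hncard, hcard]) hE

lemma run_final_base_iff (hΔ : IsDecisionFunction M m Δ) (hE : M.E.Finite)
    (hcard : M.E.ncard = m) (X : Set α) : (runP M Δ S m).1.IsBase X ↔ X = ∅ := by
  have hg : (runP M Δ S m).1.E = ∅ := by
    rw [runP_ground, PS_eq M Δ S hΔ hE hcard, Set.diff_self]
  constructor
  · intro h
    have := h.subset_ground
    rw [hg] at this
    exact Set.subset_empty_iff.mp this
  · rintro rfl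
    obtain ⟨Y, hY⟩ := (runP M Δ S m).1.exists_isBase
    have := hY.subset_ground
    rw [hg] at this
    rwa [Set.subset_empty_iff.mp this] at hY

lemma out_base (hΔ : IsDecisionFunction M m Δ) (hE : M.E.Finite) (hcard : M.E.ncard = m) :
    M.IsBase (CS M Δ S m) := by
  have hsub : CS M Δ S m ⊆ M.E :=
    (CS_subset_PS M Δ S m).trans (PS_subset M Δ S hΔ)
  refine ((inv M Δ S hΔ m le_rfl _ hsub).mpr
    ⟨subset_rfl, disj_CD M Δ S hΔ le_rfl, ?_⟩).1
  rw [Set.diff_self, run_final_base_iff M Δ S hΔ hE hcard]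

lemma out_unique (hΔ : IsDecisionFunction M m Δ) (hE : M.E.Finite) (hcard : M.E.ncard = m)
    {B : Set α} (hB : M.IsBase B) (hCB : CS M Δ S m ⊆ B) (hD : Disjoint B (DS M Δ S m)) :
    B = CS M Δ S m := by
  refine subset_antisymm ?_ hCB
  intro x hx
  have hxE : x ∈ M.E := hB.subset_ground hx
  rw [← PS_eq M Δ S hΔ hE hcard, ← CS_union_DS] at hxE
  rcases hxE with h | h
  · exact h
  · exact ((Set.disjoint_left.mp hD hx) h).elim

lemma run_congr {S' : Set α} (hΔ : IsDecisionFunction M m Δ)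
    (h : ∀ k, k < m → ¬ mLoop (runP M Δ S k).1 (eV M Δ S k) →
      ¬ mColoop (runP M Δ S k).1 (eV M Δ S k) → (eV M Δ S k ∈ S ↔ eV M Δ S k ∈ S')) :
    ∀ k, k ≤ m → runP M Δ S k = runP M Δ S' k := by
  intro k
  induction k with
  | zero => intro _; rfl
  | succ k ih =>
    intro hk1
    have hk : k < m := hk1
    have heq := ih hk.le
    rw [runP_succ, runP_succ, ← heq]
    set p := runP M Δ S k with hp
    simp only [mStep]
    by_cases h1 : mLoop p.1 (Δ p.2)
    · rw [if_pos h1, if_pos h1]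
    · rw [if_neg h1, if_neg h1]
      by_cases h2 : mColoop p.1 (Δ p.2)
      · rw [if_pos h2, if_pos h2]
      · have hiff : Δ p.2 ∈ S ↔ Δ p.2 ∈ S' := h k hk h1 h2
        by_cases h3 : Δ p.2 ∈ S
        · rw [if_pos h3, if_pos (hiff.mp h3)]
        · rw [if_neg h3, if_neg (fun hx => h3 (hiff.mpr hx))]

lemma mActive_eq (S : Set α) : mActive M m Δ S =
    {x : α | ∃ k : ℕ, k < m ∧ x = eV M Δ S k ∧
      (mLoop (runP M Δ S k).1 x ∨ mColoop (runP M Δ S k).1 x)} := rfl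

lemma mActive_subset {S1 S2 : Set α} (h : ∀ k, k ≤ m → runP M Δ S1 k = runP M Δ S2 k) :
    mActive M m Δ S1 ⊆ mActive M m Δ S2 := by
  rw [mActive_eq, mActive_eq]
  rintro x ⟨k, hk, hx, hlc⟩
  refine ⟨k, hk, ?_, ?_⟩
  · show x = Δ (runP M Δ S2 k).2
    rw [← h k hk.le]
    exact hx
  · rw [← h k hk.le]
    exact hlc

theorem main (hE : M.E.Finite) (hcard : M.E.ncard = m)
    (hΔ : IsDecisionFunction M m Δ) :
    ∀ A : Set α, A ⊆ M.E →
      ∃! B : Set α, M.IsBase B ∧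
        B \ (mActive M m Δ B ∩ B) ⊆ A ∧
        A ⊆ B ∪ (mActive M m Δ B \ B) := by
  intro A hA
  set B := CS M Δ A m with hBdef
  have hBbase : M.IsBase B := out_base M Δ A hΔ hE hcard
  have hdisjCD : Disjoint B (DS M Δ A m) := disj_CD M Δ A hΔ le_rfl
  -- Decisions with S = A agree with decisions with S = B on non-active elements.
  have hAB : ∀ k, k < m → ¬ mLoop (runP M Δ A k).1 (eV M Δ A k) →
      ¬ mColoop (runP M Δ A k).1 (eV M Δ A k) → (eV M Δ A k ∈ A ↔ eV M Δ A k ∈ B) := by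
    intro k hk hnl hnc
    constructor
    · intro hmem
      exact ⟨k, hk, rfl, Or.inr ⟨hnl, hmem⟩⟩
    · rintro ⟨j, hj, heq, hcj⟩
      have hjk : j = k := by
        by_contra hne
        rcases lt_or_gt_of_ne hne with h | h
        · exact eV_ne M Δ A hΔ h hk heq.symm
        · exact eV_ne M Δ A hΔ h hj heq
      subst hjk
      rcases hcj with h | h
      · exact absurd h hnc
      · exact heq ▸ h.2
  have hruneq : ∀ k, k ≤ m → runP M Δ A k = runP M Δ B k :=
    run_congr M Δ A hΔ hAB
  have heVeq : ∀ k, k < m → eV M Δ A k = eV M Δ B k := by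
    intro k hk
    unfold eV
    rw [hruneq k hk.le]
  have hact : mActive M m Δ B = mActive M m Δ A :=
    subset_antisymm (mActive_subset M Δ (fun k hk => (hruneq k hk).symm))
      (mActive_subset M Δ hruneq)
  refine ⟨B, ⟨hBbase, ?_, ?_⟩, ?_⟩
  · -- B \ (Act ∩ B) ⊆ A
    rw [hact]
    rintro x ⟨hxB, hxn⟩
    obtain ⟨i, hi, rfl, hci⟩ := hxB
    rcases hci with h | h
    · exact absurd ⟨⟨i, hi, rfl, Or.inr h⟩, ⟨i, hi, rfl, Or.inl h⟩⟩ hxn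
    · exact h.2
  · -- A ⊆ B ∪ (Act \ B)
    rw [hact]
    intro x hx
    have hxP : x ∈ PS M Δ A m := by
      rw [PS_eq M Δ A hΔ hE hcard]
      exact hA hx
    obtain ⟨i, hi, rfl⟩ := hxP
    by_cases hci : conS M Δ A i
    · exact Or.inl ⟨i, hi, rfl, hci⟩
    · have hxD : eV M Δ A i ∈ DS M Δ A m := ⟨i, hi, rfl, hci⟩
      have hxnB : eV M Δ A i ∉ B := fun h => Set.disjoint_left.mp hdisjCD h hxD
      rw [conS] at hci
      push_neg at hci
      have hl : mLoop (runP M Δ A i).1 (eV M Δ A i) := by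
        by_contra hnl
        exact (hci.2 hnl) hx
      exact Or.inr ⟨⟨i, hi, rfl, Or.inl hl⟩, hxnB⟩
  · -- uniqueness
    rintro B' ⟨hB'base, h1, h2⟩
    have hB'E : B' ⊆ M.E := hB'base.subset_ground
    -- non-active elements of the run with S = B' lie in B' iff they lie in A
    have hbicond : ∀ k, k < m → ¬ mLoop (runP M Δ B' k).1 (eV M Δ B' k) →
        ¬ mColoop (runP M Δ B' k).1 (eV M Δ B' k) →
        (eV M Δ B' k ∈ B' ↔ eV M Δ B' k ∈ A) := by
      intro k hk hnl hnc
      have hnact : eV M Δ B' k ∉ mActive M m Δ B' := by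
        rw [mActive_eq]
        rintro ⟨j, hj, heq, hlc⟩
        have hjk : j = k := by
          by_contra hne
          rcases lt_or_gt_of_ne hne with h | h
          · exact eV_ne M Δ B' hΔ h hk heq.symm
          · exact eV_ne M Δ B' hΔ h hj heq
        subst hjk
        rcases hlc with h | h
        · exact hnl (heq ▸ h)
        · exact hnc (heq ▸ h)
      constructor
      · intro hmem
        exact h1 ⟨hmem, fun h => hnact h.1⟩
      · intro hmem
        rcases h2 hmem with h | h
        · exact h
        · exact absurd h.1 hnact
    have hruneq' : ∀ k, k ≤ m → runP M Δ B' k = runP M Δ A k :=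
      run_congr M Δ B' hΔ hbicond
    have heVeq' : ∀ k, k < m → eV M Δ B' k = eV M Δ A k := by
      intro k hk
      unfold eV
      rw [hruneq' k hk.le]
    -- transported bicondition along the run with S = A
    have hbiA : ∀ k, k < m → ¬ mLoop (runP M Δ A k).1 (eV M Δ A k) →
        ¬ mColoop (runP M Δ A k).1 (eV M Δ A k) → (eV M Δ A k ∈ B' ↔ eV M Δ A k ∈ A) := by
      intro k hk hnl hnc
      have := hbicond k hk
      rw [hruneq' k hk.le, heVeq' k hk] at this
      exact this hnl hnc
    -- show CS A k ⊆ B' and B' disjoint from DS A k, by induction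
    have hmain : ∀ k, k ≤ m → CS M Δ A k ⊆ B' ∧ Disjoint B' (DS M Δ A k) := by
      intro k
      induction k with
      | zero =>
        intro _
        constructor
        · rintro x ⟨i, hi, -⟩; omega
        · rw [Set.disjoint_right]
          rintro x ⟨i, hi, -⟩; omega
      | succ k ih =>
        intro hk1
        have hk : k < m := hk1
        obtain ⟨ihC, ihD⟩ := ih hk.le
        have hbase' : (runP M Δ A k).1.IsBase (B' \ CS M Δ A k) :=
          ((inv M Δ A hΔ k hk.le B' hB'E).mp ⟨hB'base, ihC, ihD⟩).2.2
        have hePS : eV M Δ A k ∉ PS M Δ A k := eV_not_PS M Δ A hΔ hk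
        have heCS : eV M Δ A k ∉ CS M Δ A k := fun h => hePS (CS_subset_PS M Δ A k h)
        have heG : eV M Δ A k ∈ (runP M Δ A k).1.E := by
          rw [runP_ground]
          exact ⟨eV_mem M Δ A hΔ hk, hePS⟩
        by_cases hc : conS M Δ A k
        · -- contraction: need eV ∈ B'
          have heB' : eV M Δ A k ∈ B' := by
            by_cases hcl : mColoop (runP M Δ A k).1 (eV M Δ A k)
            · exact (hcl.2 _ hbase').1
            · rcases hc with h | h
              · exact absurd h hcl
              · exact (hbiA k hk h.1 hcl).mpr h.2
          rw [CS_succ_con M Δ A hc, DS_succ_con M Δ A hc]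
          exact ⟨Set.union_subset ihC (Set.singleton_subset_iff.mpr heB'), ihD⟩
        · -- deletion: need eV ∉ B'
          have hncl : ¬ mColoop (runP M Δ A k).1 (eV M Δ A k) := fun h => hc (Or.inl h)
          have heB' : eV M Δ A k ∉ B' := by
            by_cases hl : mLoop (runP M Δ A k).1 (eV M Δ A k)
            · intro hmem
              exact hl.2 (hbase'.indep.subset (Set.singleton_subset_iff.mpr ⟨hmem, heCS⟩))
            · have hnA : eV M Δ A k ∉ A := by
                rw [conS] at hc
                push_neg at hc
                exact hc.2 hl
              exact fun hmem => hnA ((hbiA k hk hl hncl).mp hmem)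
          rw [CS_succ_del M Δ A hc, DS_succ_del M Δ A hc]
          refine ⟨ihC, ?_⟩
          rw [Set.disjoint_union_right, Set.disjoint_singleton_right]
          exact ⟨ihD, heB'⟩
    obtain ⟨hCB', hDB'⟩ := hmain m le_rfl
    exact out_unique M Δ A hΔ hE hcard hB'base hCB' hDB'

end S19


/-- For any matroid `M` on a finite nonempty ground set and any decision function `Δ` for
`M`, the intervals `[B ∖ 𝓘(B), B ∪ 𝓔(B)]` indexed by the bases `B` partition the power set
of the ground set: every `A ⊆ E` lies in exactly one of them. -/
theorem stmt_19 {α : Type*} (M : Matroid α) (hE : M.E.Finite) (hm : 1 ≤ M.E.ncard)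
    (Δ : List Bool → α) (hΔ : IsDecisionFunction M M.E.ncard Δ) :
    ∀ A : Set α, A ⊆ M.E →
      ∃! B : Set α, M.IsBase B ∧
        B \ (mActive M M.E.ncard Δ B ∩ B) ⊆ A ∧
        A ⊆ B ∪ (mActive M M.E.ncard Δ B \ B) := by
  exact S19.main M Δ hE rfl hΔ
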